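/- arXiv:1308.1117 — 3 statements merged into one kernel-verified Lean document; each statement's English description precedes it below -/
import Mathlib

section
/- Let H be a complex Hilbert space, (φ_j)_{j∈ℕ} an orthonormal sequence in H, and A a bounded linear operator on H. If the sequence of diagonal matrix elements ⟨A φ_j, φ_j⟩ converges to a limit L ∈ ℂ, then |L| ≤ inf { ‖A + K‖ : K a compact operator on H }, i.e. any weak limit of the matrix elements is bounded by the essential norm of A. -/
open scoped ComplexInnerProductSpace
open Filter

/-- Weak convergence to zero of an orthonormal sequence (Bessel). -/
lemma aux_weak_zero {H : Type*} [NormedAddCommGroup H] [InnerProductSpace ℂ H]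
    (φ : ℕ → H) (hφ : Orthonormal ℂ φ) (x : H) :
    Tendsto (fun j => ⟪φ j, x⟫) atTop (nhds (0 : ℂ)) := by
  have hs : Summable fun j => ‖⟪φ j, x⟫‖ ^ 2 := hφ.inner_products_summable x
  have h1 : Tendsto (fun j => ‖⟪φ j, x⟫‖ ^ 2) atTop (nhds 0) := hs.tendsto_atTop_zero
  have h2 : Tendsto (fun j => ‖⟪φ j, x⟫‖) atTop (nhds 0) := by
    have := h1.sqrt
    simpa [Real.sqrt_sq (norm_nonneg _)] using this
  rwa [← tendsto_zero_iff_norm_tendsto_zero] at h2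

/-- A compact operator sends an orthonormal sequence to a sequence whose diagonal
matrix elements tend to zero. -/
lemma aux_compact_zero {H : Type*} [NormedAddCommGroup H] [InnerProductSpace ℂ H]
    (φ : ℕ → H) (hφ : Orthonormal ℂ φ) (K : H →L[ℂ] H) (hK : IsCompactOperator (⇑K)) :
    Tendsto (fun j => ⟪φ j, K (φ j)⟫) atTop (nhds (0 : ℂ)) := by
  have hcomp : IsCompact (closure (⇑K '' Metric.closedBall 0 1)) :=
    (isCompactOperator_iff_isCompact_closure_image_closedBall (K : H →ₗ[ℂ] H)
      one_pos).mp hK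
  refine tendsto_of_subseq_tendsto fun ns hns => ?_
  have hmem : ∀ n, K (φ (ns n)) ∈ closure (⇑K '' Metric.closedBall 0 1) := by
    intro n
    apply subset_closure
    exact ⟨φ (ns n), by simp [hφ.1 (ns n)], rfl⟩
  obtain ⟨y, -, ms, hms, hy⟩ := hcomp.tendsto_subseq hmem
  refine ⟨ms, ?_⟩
  have key : ∀ n, ⟪φ (ns (ms n)), K (φ (ns (ms n)))⟫
      = ⟪φ (ns (ms n)), K (φ (ns (ms n))) - y⟫ + ⟪φ (ns (ms n)), y⟫ := by
    intro n; rw [← inner_add_right, sub_add_cancel]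
  have h1 : Tendsto (fun n => ⟪φ (ns (ms n)), K (φ (ns (ms n))) - y⟫) atTop (nhds (0:ℂ)) := by
    rw [tendsto_zero_iff_norm_tendsto_zero]
    have hnorm : Tendsto (fun n => ‖K (φ (ns (ms n))) - y‖) atTop (nhds 0) := by
      have := hy.sub_const y
      simpa [tendsto_zero_iff_norm_tendsto_zero, Function.comp] using this
    refine squeeze_zero (fun n => norm_nonneg _) (fun n => ?_) hnorm
    calc ‖⟪φ (ns (ms n)), K (φ (ns (ms n))) - y⟫‖
        ≤ ‖φ (ns (ms n))‖ * ‖K (φ (ns (ms n))) - y‖ := norm_inner_le_norm _ _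
      _ = ‖K (φ (ns (ms n))) - y‖ := by rw [hφ.1 _]; ring
  have h2 : Tendsto (fun n => ⟪φ (ns (ms n)), y⟫) atTop (nhds (0:ℂ)) :=
    (aux_weak_zero φ hφ y).comp (hns.comp hms.tendsto_atTop)
  have := h1.add h2
  simp only [add_zero] at this
  exact this.congr fun n => (key n).symm

/-- If `(φ j)` is an orthonormal sequence in a complex Hilbert space `H`, `A` is a bounded
operator on `H`, and the diagonal matrix elements `⟨A φ_j, φ_j⟩` converge to `L`, then
`|L|` is bounded by the essential norm `inf { ‖A + K‖ : K compact }` of `A`. -/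
theorem stmt_1 {H : Type*} [NormedAddCommGroup H] [InnerProductSpace ℂ H] [CompleteSpace H]
    (φ : ℕ → H) (hφ : Orthonormal ℂ φ)
    (A : H →L[ℂ] H) (L : ℂ)
    (hconv : Tendsto (fun j => ⟪φ j, A (φ j)⟫) atTop (nhds L)) :
    ‖L‖ ≤ sInf {x : ℝ | ∃ K : H →L[ℂ] H, IsCompactOperator (⇑K) ∧ x = ‖A + K‖} := by
  refine le_csInf ⟨‖A + 0‖, 0, isCompactOperator_zero, rfl⟩ ?_
  rintro b ⟨K, hK, rfl⟩
  have hzero := aux_compact_zero φ hφ K hK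
  have hconv' : Tendsto (fun j => ⟪φ j, (A + K) (φ j)⟫) atTop (nhds L) := by
    have := hconv.add hzero
    simp only [add_zero] at this
    refine this.congr fun j => ?_
    simp [inner_add_right]
  have hnormconv : Tendsto (fun j => ‖⟪φ j, (A + K) (φ j)⟫‖) atTop (nhds ‖L‖) :=
    hconv'.norm
  refine le_of_tendsto hnormconv (Eventually.of_forall fun j => ?_)
  calc ‖⟪φ j, (A + K) (φ j)⟫‖ ≤ ‖φ j‖ * ‖(A + K) (φ j)‖ := norm_inner_le_norm _ _
    _ ≤ ‖φ j‖ * (‖A + K‖ * ‖φ j‖) := by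
        gcongr; exact (A + K).le_opNorm _
    _ = ‖A + K‖ := by rw [hφ.1 _]; ring
end

section
/- Let H be a complex Hilbert space, U a unitary operator on H, (φ_j)_{j∈ℕ} a sequence of unit eigenvectors of U, and F a bounded operator on H. Suppose that for every nonzero integer p, lim_{N→∞} (1/N) ∑_{j=1}^{N} ⟨U^{−p} F* U^{p} F φ_j, φ_j⟩ = 0. Then lim_{N→∞} (1/N) ∑_{j=1}^{N} |⟨F φ_j, φ_j⟩|² = 0. (This is the abstract operator-theoretic core of the almost-orthogonality results: when the canonical relation of F almost nowhere commutes with the flow, the averaged autocorrelations vanish and hence the variance of the diagonal matrix elements tends to zero.) -/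
set_option maxHeartbeats 1000000

open scoped ComplexInnerProductSpace
open Filter

/-- Abstract almost-orthogonality: if `(φ j)` is a sequence of unit eigenvectors of a
unitary `U` and `F` is a bounded operator such that for every nonzero integer `p` the Cesàro
averages of the autocorrelation matrix elements `⟨U^{-p} F* U^{p} F φ_j, φ_j⟩` tend to `0`,
then the variance `(1/N) ∑_{j=1}^{N} |⟨F φ_j, φ_j⟩|²` tends to `0`. -/
theorem stmt_7 {H : Type*} [NormedAddCommGroup H] [InnerProductSpace ℂ H] [CompleteSpace H]
    (U : unitary (H →L[ℂ] H)) (φ : ℕ → H) (hnorm : ∀ j, ‖φ j‖ = 1)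
    (c : ℕ → ℂ) (heig : ∀ j, (↑U : H →L[ℂ] H) (φ j) = c j • φ j)
    (F : H →L[ℂ] H)
    (hcorr : ∀ p : ℤ, p ≠ 0 →
      Tendsto (fun N : ℕ => (1 / (N : ℂ)) *
          ∑ j ∈ Finset.Icc 1 N,
            ⟪φ j, ((↑(U ^ (-p)) : H →L[ℂ] H) ∘L ContinuousLinearMap.adjoint F ∘L
                  (↑(U ^ p) : H →L[ℂ] H) ∘L F) (φ j)⟫)
        atTop (nhds 0)) :
    Tendsto (fun N : ℕ => (1 / (N : ℝ)) * ∑ j ∈ Finset.Icc 1 N, ‖⟪φ j, F (φ j)⟫‖ ^ 2)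
      atTop (nhds 0) := by
  classical
  set A : ℤ → (H →L[ℂ] H) := fun r =>
    (↑(U ^ (-r)) : H →L[ℂ] H) ∘L ContinuousLinearMap.adjoint F ∘L
      (↑(U ^ r) : H →L[ℂ] H) ∘L F with hA
  have hAapp : ∀ (r : ℤ) (x : H), A r x = (↑(U ^ (-r)) : H →L[ℂ] H)
      ((ContinuousLinearMap.adjoint F) ((↑(U ^ r) : H →L[ℂ] H) (F x))) := fun r x => rfl
  -- Cesàro averages of autocorrelations, as in `hcorr`
  set fC : ℤ → ℕ → ℂ := fun r N => (1 / (N : ℂ)) *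
      ∑ j ∈ Finset.Icc 1 N, ⟪φ j, A r (φ j)⟫ with hfC
  have hfC0 : ∀ r : ℤ, r ≠ 0 → Tendsto (fC r) atTop (nhds 0) := by
    intro r hr
    simp only [hfC, hA]
    exact hcorr r hr
  -- basic facts about eigenvalues
  have hc1 : ∀ j, ‖c j‖ = 1 := by
    intro j
    have h1 : ‖(↑U : H →L[ℂ] H) (φ j)‖ = 1 := by rw [Unitary.norm_map]; exact hnorm j
    rwa [heig j, norm_smul, hnorm j, mul_one] at h1
  have hcne : ∀ j, c j ≠ 0 := fun j h => by simpa [h] using hc1 j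
  -- applying products of unitaries
  have happ_mul : ∀ (u v : unitary (H →L[ℂ] H)) (x : H),
      (↑(u * v) : H →L[ℂ] H) x = (↑u : H →L[ℂ] H) ((↑v : H →L[ℂ] H) x) := fun u v x => rfl
  have happ_inv : ∀ (u : unitary (H →L[ℂ] H)) (y : H),
      (↑u : H →L[ℂ] H) ((↑u⁻¹ : H →L[ℂ] H) y) = y := by
    intro u y
    have h1 : (↑(u * u⁻¹) : H →L[ℂ] H) y = y := by
      rw [mul_inv_cancel]; rfl
    rw [happ_mul] at h1; exact h1
  have hmove : ∀ (u : unitary (H →L[ℂ] H)) (x y : H),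
      ⟪(↑u : H →L[ℂ] H) x, y⟫ = ⟪x, (↑u⁻¹ : H →L[ℂ] H) y⟫ := by
    intro u x y
    conv_lhs => rw [← happ_inv u y]
    rw [Unitary.inner_map_map]
  have happ_add : ∀ (p q : ℤ) (x : H),
      (↑(U ^ p) : H →L[ℂ] H) ((↑(U ^ q) : H →L[ℂ] H) x)
        = (↑(U ^ (p + q)) : H →L[ℂ] H) x := by
    intro p q x
    rw [← happ_mul, ← zpow_add]
  have hmoveneg : ∀ (p : ℤ) (x y : H),
      ⟪(↑(U ^ p) : H →L[ℂ] H) x, y⟫ = ⟪x, (↑(U ^ (-p)) : H →L[ℂ] H) y⟫ := by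
    intro p x y
    rw [hmove (U ^ p) x y, zpow_neg]
  have hmove' : ∀ (p : ℤ) (x y : H),
      ⟪x, (↑(U ^ (-p)) : H →L[ℂ] H) y⟫ = ⟪(↑(U ^ p) : H →L[ℂ] H) x, y⟫ :=
    fun p x y => (hmoveneg p x y).symm
  -- eigenvalue relation for natural powers
  have heigP : ∀ (j n : ℕ), (↑(U ^ n) : H →L[ℂ] H) (φ j) = (c j) ^ n • φ j := by
    intro j n
    induction n with
    | zero => rw [pow_zero, pow_zero, one_smul]; rfl
    | succ n ih =>
      rw [pow_succ', happ_mul, ih, map_smul, heig j, smul_smul, ← pow_succ]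
  -- eigenvalue relation for integer powers
  have heigZ : ∀ (j : ℕ) (p : ℤ), (↑(U ^ p) : H →L[ℂ] H) (φ j) = (c j) ^ p • φ j := by
    intro j p
    induction p using Int.rec with
    | ofNat n => rw [Int.ofNat_eq_natCast, zpow_natCast, zpow_natCast]; exact heigP j n
    | negSucc n =>
      have hns : (Int.negSucc n) = -((n + 1 : ℕ) : ℤ) := by
        rw [Int.negSucc_eq]; norm_num
      set m : ℕ := n + 1 with hm
      have key : (↑(U ^ (-(m : ℤ))) : H →L[ℂ] H) ((c j) ^ m • φ j) = φ j := by
        have h1 : (↑(U ^ (-(m : ℤ)) * U ^ (m : ℤ)) : H →L[ℂ] H) (φ j) = φ j := by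
          rw [← zpow_add, neg_add_cancel, zpow_zero]; rfl
        rw [happ_mul, zpow_natCast, heigP j m] at h1
        exact h1
      have hmne : (c j) ^ m ≠ 0 := pow_ne_zero _ (hcne j)
      rw [map_smul] at key
      have h2 : (↑(U ^ (-(m : ℤ))) : H →L[ℂ] H) (φ j) = ((c j) ^ m)⁻¹ • φ j :=
        ((inv_smul_eq_iff₀ hmne).mpr key.symm).symm
      rw [hns, h2, zpow_neg, zpow_natCast]
  -- conj of eigenvalue powers is inverse
  have hconj : ∀ (j : ℕ) (p : ℤ), (starRingEnd ℂ) ((c j) ^ p) = ((c j) ^ p)⁻¹ := by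
    intro j p
    have hz : ‖(c j) ^ p‖ = 1 := by rw [norm_zpow, hc1 j, one_zpow]
    have h1 : (c j) ^ p * (starRingEnd ℂ) ((c j) ^ p) = 1 := by
      rw [Complex.mul_conj]
      norm_cast
      rw [Complex.normSq_eq_norm_sq, hz, one_pow]
    exact eq_inv_of_mul_eq_one_right h1
  -- the orbit-translated vectors
  set t : ℕ → ℤ → H := fun j p =>
    (↑(U ^ (-p)) : H →L[ℂ] H) (F ((↑(U ^ p) : H →L[ℂ] H) (φ j))) with ht
  have ht' : ∀ (j : ℕ) (p : ℤ),
      t j p = (c j) ^ p • (↑(U ^ (-p)) : H →L[ℂ] H) (F (φ j)) := by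
    intro j p
    simp only [ht, heigZ j p, map_smul]
  -- inner product of φ j with t j p
  have hphit : ∀ (j : ℕ) (p : ℤ), ⟪φ j, t j p⟫ = ⟪φ j, F (φ j)⟫ := by
    intro j p
    rw [ht' j p, inner_smul_right, hmove' p (φ j) (F (φ j)), heigZ j p, inner_smul_left,
      hconj j p, ← mul_assoc, mul_inv_cancel₀ (zpow_ne_zero _ (hcne j)), one_mul]
  -- autocorrelation matrix elements
  have hAr : ∀ (j : ℕ) (r : ℤ), ⟪φ j, A r (φ j)⟫
      = (starRingEnd ℂ) ((c j) ^ r) * ⟪F (φ j), (↑(U ^ r) : H →L[ℂ] H) (F (φ j))⟫ := by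
    intro j r
    rw [hAapp, hmove' r (φ j) _, heigZ j r, inner_smul_left,
      ContinuousLinearMap.adjoint_inner_right]
  -- inner products of the orbit-translated vectors are autocorrelations
  have htt : ∀ (j : ℕ) (p q : ℤ),
      ⟪t j p, t j q⟫ = (starRingEnd ℂ) ⟪φ j, A (q - p) (φ j)⟫ := by
    intro j p q
    have hL : ⟪t j p, t j q⟫
        = (c j) ^ (q - p) * ⟪F (φ j), (↑(U ^ (p - q)) : H →L[ℂ] H) (F (φ j))⟫ := by
      rw [ht' j p, ht' j q, inner_smul_left, inner_smul_right, hmoveneg (-p) _ _, neg_neg,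
        happ_add, ← sub_eq_add_neg, hconj j p, ← mul_assoc]
      congr 1
      rw [← zpow_neg, ← zpow_add₀ (hcne j), neg_add_eq_sub]
    have hR : (starRingEnd ℂ) ⟪φ j, A (q - p) (φ j)⟫
        = (c j) ^ (q - p) * ⟪F (φ j), (↑(U ^ (p - q)) : H →L[ℂ] H) (F (φ j))⟫ := by
      rw [hAr j (q - p), map_mul, Complex.conj_conj, inner_conj_symm,
        hmoveneg (q - p) _ _, neg_sub]
    rw [hL, hR]
  -- A 0 matrix elements are bounded by ‖F‖²
  have hA0 : ∀ j : ℕ, (⟪φ j, A 0 (φ j)⟫).re ≤ ‖F‖ ^ 2 := by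
    intro j
    have e1 : ⟪φ j, A 0 (φ j)⟫ = ⟪F (φ j), F (φ j)⟫ := by
      rw [hAapp, neg_zero, zpow_zero]
      have e2 : ∀ y : H, (↑(1 : unitary (H →L[ℂ] H)) : H →L[ℂ] H) y = y := fun y => rfl
      rw [e2, e2, ContinuousLinearMap.adjoint_inner_right]
    have e3 : (⟪F (φ j), F (φ j)⟫ : ℂ).re = ‖F (φ j)‖ ^ 2 := by
      rw [inner_self_eq_norm_sq_to_K]; norm_cast
    rw [e1, e3]
    have := F.le_opNorm (φ j)
    rw [hnorm j, mul_one] at this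
    exact pow_le_pow_left₀ (norm_nonneg _) this 2
  -- real parts of the Cesàro averages
  have hre : ∀ (r : ℤ) (N : ℕ), (fC r N).re
      = (1 / (N : ℝ)) * ∑ j ∈ Finset.Icc 1 N, (⟪φ j, A r (φ j)⟫).re := by
    intro r N
    have : fC r N = ((((1 : ℝ) / (N : ℝ)) : ℝ) : ℂ) * ∑ j ∈ Finset.Icc 1 N, ⟪φ j, A r (φ j)⟫ := by
      rw [hfC]; push_cast; ring_nf
    rw [this, Complex.re_ofReal_mul, Complex.re_sum]
  -- bound on the diagonal Cesàro average
  have hdiag : ∀ N : ℕ, (fC 0 N).re ≤ ‖F‖ ^ 2 := by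
    intro N
    rw [hre]
    have h1 : ∑ j ∈ Finset.Icc 1 N, (⟪φ j, A 0 (φ j)⟫).re ≤ (N : ℝ) * ‖F‖ ^ 2 := by
      calc ∑ j ∈ Finset.Icc 1 N, (⟪φ j, A 0 (φ j)⟫).re
          ≤ ∑ j ∈ Finset.Icc 1 N, ‖F‖ ^ 2 := Finset.sum_le_sum fun j _ => hA0 j
        _ = (N : ℝ) * ‖F‖ ^ 2 := by
            rw [Finset.sum_const, Nat.card_Icc, nsmul_eq_mul]; norm_num
    rcases Nat.eq_zero_or_pos N with hN | hN
    · subst hN; simp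
    · have hNpos : (0 : ℝ) < N := by exact_mod_cast hN
      calc (1 / (N : ℝ)) * ∑ j ∈ Finset.Icc 1 N, (⟪φ j, A 0 (φ j)⟫).re
          ≤ (1 / (N : ℝ)) * ((N : ℝ) * ‖F‖ ^ 2) := by
            apply mul_le_mul_of_nonneg_left h1; positivity
        _ = ‖F‖ ^ 2 := by field_simp
  -- main ε-argument
  rw [Metric.tendsto_atTop]
  intro ε hε
  -- choose M large
  obtain ⟨M, hMgt⟩ := exists_nat_gt (‖F‖ ^ 2 / (ε / 2))
  have hM1 : 1 ≤ M := by
    by_contra h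
    push_neg at h
    interval_cases M
    · simp at hMgt
      nlinarith [sq_nonneg ‖F‖, half_pos hε, div_nonneg (sq_nonneg ‖F‖) (le_of_lt (half_pos hε))]
  have hMpos : (0 : ℝ) < (M : ℝ) := by exact_mod_cast hM1
  have hMbound : ‖F‖ ^ 2 / (M : ℝ) < ε / 2 := by
    rw [div_lt_iff₀ hMpos]
    calc ‖F‖ ^ 2 = (‖F‖ ^ 2 / (ε / 2)) * (ε / 2) := by field_simp
      _ < (M : ℝ) * (ε / 2) := by
          apply mul_lt_mul_of_pos_right hMgt (half_pos hε)
      _ = ε / 2 * (M : ℝ) := by ring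
  set P : Finset ℤ := Finset.Icc (1 : ℤ) (M : ℤ) with hP
  have hcardP : P.card = M := by
    rw [hP, Int.card_Icc]
    simp
  -- off-diagonal remainder
  set Gd : ℕ → ℝ := fun N => (1 / (M : ℝ) ^ 2) *
      ∑ p ∈ P, ∑ q ∈ P, (if p = q then 0 else (fC (q - p) N).re) with hGd
  have hGd0 : Tendsto Gd atTop (nhds 0) := by
    have h1 : Tendsto (fun N => ∑ p ∈ P, ∑ q ∈ P,
        (if p = q then 0 else (fC (q - p) N).re)) atTop (nhds 0) := by
      have h2 : ∀ p ∈ P, ∀ q ∈ P, Tendsto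
          (fun N => if p = q then 0 else (fC (q - p) N).re) atTop (nhds 0) := by
        intro p _ q _
        by_cases h : p = q
        · simp only [h, if_pos]
          exact tendsto_const_nhds
        · simp only [if_neg h]
          have hne : q - p ≠ 0 := sub_ne_zero.mpr (Ne.symm h)
          have := (Complex.continuous_re.tendsto 0).comp (hfC0 (q - p) hne)
          simpa [Function.comp_def] using this
      have : Tendsto (fun N => ∑ p ∈ P, ∑ q ∈ P,
          (if p = q then 0 else (fC (q - p) N).re)) atTop (nhds (∑ p ∈ P, ∑ q ∈ P, 0)) := by
        apply tendsto_finset_sum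
        intro p hp
        apply tendsto_finset_sum
        intro q hq
        exact h2 p hp q hq
      simpa using this
    have := h1.const_mul (1 / (M : ℝ) ^ 2)
    simpa [hGd] using this
  -- pointwise Cauchy-Schwarz bound
  have hpoint : ∀ j : ℕ, ‖⟪φ j, F (φ j)⟫‖ ^ 2
      ≤ (1 / (M : ℝ) ^ 2) * ∑ p ∈ P, ∑ q ∈ P, (⟪φ j, A (q - p) (φ j)⟫).re := by
    intro j
    set g : H := ∑ p ∈ P, t j p with hg
    have e1 : ⟪φ j, g⟫ = (M : ℂ) * ⟪φ j, F (φ j)⟫ := by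
      rw [hg, inner_sum, Finset.sum_congr rfl fun p _ => hphit j p, Finset.sum_const, hcardP,
        nsmul_eq_mul]
    have hCS : (M : ℝ) * ‖⟪φ j, F (φ j)⟫‖ ≤ ‖g‖ := by
      have e2 := norm_inner_le_norm (𝕜 := ℂ) (φ j) g
      rw [e1, norm_mul, RCLike.norm_natCast, hnorm j, one_mul] at e2
      exact e2
    have hgg : ‖g‖ ^ 2 = ∑ p ∈ P, ∑ q ∈ P, (⟪φ j, A (q - p) (φ j)⟫).re := by
      have e3 : ⟪g, g⟫ = ∑ p ∈ P, ∑ q ∈ P, (starRingEnd ℂ) ⟪φ j, A (q - p) (φ j)⟫ := by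
        rw [hg, sum_inner]
        refine Finset.sum_congr rfl fun p _ => ?_
        rw [inner_sum]
        exact Finset.sum_congr rfl fun q _ => htt j p q
      have e4 : ((‖g‖ : ℝ) : ℂ) ^ 2 = ⟪g, g⟫ := (inner_self_eq_norm_sq_to_K g).symm
      have e5 : ‖g‖ ^ 2 = (⟪g, g⟫ : ℂ).re := by
        rw [← e4]; norm_cast
      rw [e5, e3, Complex.re_sum]
      refine Finset.sum_congr rfl fun p _ => ?_
      rw [Complex.re_sum]
      exact Finset.sum_congr rfl fun q _ => Complex.conj_re _
    have h5 : ((M : ℝ) * ‖⟪φ j, F (φ j)⟫‖) ^ 2 ≤ ‖g‖ ^ 2 :=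
      pow_le_pow_left₀ (by positivity) hCS 2
    rw [mul_pow, hgg] at h5
    have hM2 : (0 : ℝ) < (M : ℝ) ^ 2 := by positivity
    calc ‖⟪φ j, F (φ j)⟫‖ ^ 2
        = (1 / (M : ℝ) ^ 2) * ((M : ℝ) ^ 2 * ‖⟪φ j, F (φ j)⟫‖ ^ 2) := by field_simp
      _ ≤ (1 / (M : ℝ) ^ 2) * (∑ p ∈ P, ∑ q ∈ P, (⟪φ j, A (q - p) (φ j)⟫).re) := by
          apply mul_le_mul_of_nonneg_left h5 (by positivity)
  -- key bound: for every N
  have hkey : ∀ N : ℕ, (1 / (N : ℝ)) * ∑ j ∈ Finset.Icc 1 N, ‖⟪φ j, F (φ j)⟫‖ ^ 2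
      ≤ ‖F‖ ^ 2 / (M : ℝ) + Gd N := by
    intro N
    have hswap : (1 / (N : ℝ)) * ∑ j ∈ Finset.Icc 1 N,
          ((1 / (M : ℝ) ^ 2) * ∑ p ∈ P, ∑ q ∈ P, (⟪φ j, A (q - p) (φ j)⟫).re)
        = (1 / (M : ℝ) ^ 2) * ∑ p ∈ P, ∑ q ∈ P, (fC (q - p) N).re := by
      simp only [hre, Finset.mul_sum]
      rw [Finset.sum_comm]
      refine Finset.sum_congr rfl fun p _ => ?_
      rw [Finset.sum_comm]
      refine Finset.sum_congr rfl fun q _ => ?_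
      refine Finset.sum_congr rfl fun j _ => ?_
      ring
    have h1 : (1 / (N : ℝ)) * ∑ j ∈ Finset.Icc 1 N, ‖⟪φ j, F (φ j)⟫‖ ^ 2
        ≤ (1 / (M : ℝ) ^ 2) * ∑ p ∈ P, ∑ q ∈ P, (fC (q - p) N).re := by
      rw [← hswap]
      apply mul_le_mul_of_nonneg_left _ (by positivity)
      exact Finset.sum_le_sum fun j _ => hpoint j
    have h2 : ∑ p ∈ P, ∑ q ∈ P, (fC (q - p) N).re
        = ∑ p ∈ P, ∑ q ∈ P, (if p = q then (fC 0 N).re else 0)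
          + ∑ p ∈ P, ∑ q ∈ P, (if p = q then 0 else (fC (q - p) N).re) := by
      rw [← Finset.sum_add_distrib]
      refine Finset.sum_congr rfl fun p _ => ?_
      rw [← Finset.sum_add_distrib]
      refine Finset.sum_congr rfl fun q _ => ?_
      by_cases h : p = q
      · subst h; simp
      · simp [h]
    have h3 : ∑ p ∈ P, ∑ q ∈ P, (if p = q then (fC 0 N).re else 0) = (M : ℝ) * (fC 0 N).re := by
      have h4 : ∀ p ∈ P, ∑ q ∈ P, (if p = q then (fC 0 N).re else 0) = (fC 0 N).re := by
        intro p hp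
        rw [Finset.sum_ite_eq]
        exact if_pos hp
      rw [Finset.sum_congr rfl h4, Finset.sum_const, hcardP, nsmul_eq_mul]
    calc (1 / (N : ℝ)) * ∑ j ∈ Finset.Icc 1 N, ‖⟪φ j, F (φ j)⟫‖ ^ 2
        ≤ (1 / (M : ℝ) ^ 2) * ∑ p ∈ P, ∑ q ∈ P, (fC (q - p) N).re := h1
      _ = (1 / (M : ℝ) ^ 2) * ((M : ℝ) * (fC 0 N).re) + Gd N := by
          rw [h2, h3, hGd]; ring
      _ ≤ (1 / (M : ℝ) ^ 2) * ((M : ℝ) * ‖F‖ ^ 2) + Gd N := by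
          have : (M : ℝ) * (fC 0 N).re ≤ (M : ℝ) * ‖F‖ ^ 2 :=
            mul_le_mul_of_nonneg_left (hdiag N) (by positivity)
          have := mul_le_mul_of_nonneg_left this (show (0:ℝ) ≤ 1 / (M:ℝ)^2 by positivity)
          linarith
      _ = ‖F‖ ^ 2 / (M : ℝ) + Gd N := by
          field_simp
  -- conclude
  obtain ⟨N₀, hN₀⟩ := (Metric.tendsto_atTop.mp hGd0) (ε / 2) (half_pos hε)
  refine ⟨N₀, fun n hn => ?_⟩
  have hGdn : Gd n < ε / 2 := by
    have := hN₀ n hn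
    rw [Real.dist_eq, sub_zero] at this
    calc Gd n ≤ |Gd n| := le_abs_self _
      _ < ε / 2 := this
  have hSn : (0 : ℝ) ≤ (1 / (n : ℝ)) * ∑ j ∈ Finset.Icc 1 n, ‖⟪φ j, F (φ j)⟫‖ ^ 2 := by
    positivity
  rw [Real.dist_eq, sub_zero, abs_of_nonneg hSn]
  calc (1 / (n : ℝ)) * ∑ j ∈ Finset.Icc 1 n, ‖⟪φ j, F (φ j)⟫‖ ^ 2
      ≤ ‖F‖ ^ 2 / (M : ℝ) + Gd n := hkey n
    _ < ε / 2 + ε / 2 := add_lt_add hMbound hGdn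
    _ = ε := by ring
end

section
/- Let X be a compact metric space, μ a finite nonnegative Borel measure on X, and ν a finite signed Borel measure on X. Suppose that for every continuous function f : X → ℝ, (∫_X f dν)² ≤ ∫_X f² dμ. Then ν is absolutely continuous with respect to μ, i.e. the total variation |ν| vanishes on every μ-null Borel set. (This is the mechanism by which the limit measures ν_k of the Hecke matrix elements are shown to be absolutely continuous with respect to the quantum limit μ.) -/
open MeasureTheory Set

/-- The integral of a function against a finite signed measure, defined via the Jordan
decomposition `ν = ν⁺ - ν⁻`. -/
noncomputable def signedIntegral {X : Type*} [MeasurableSpace X]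
    (ν : SignedMeasure X) (f : X → ℝ) : ℝ :=
  (∫ x, f x ∂ν.toJordanDecomposition.posPart) - ∫ x, f x ∂ν.toJordanDecomposition.negPart

lemma key_aux {X : Type*} [MetricSpace X] [CompactSpace X] [MeasurableSpace X] [BorelSpace X]
    (μ p n : Measure X) [IsFiniteMeasure μ] [IsFiniteMeasure p] [IsFiniteMeasure n]
    (h : ∀ f : C(X, ℝ), ((∫ x, f x ∂p) - ∫ x, f x ∂n) ^ 2 ≤ ∫ x, (f x) ^ 2 ∂μ)
    (E : Set X) (hE : MeasurableSet E) (hμ : μ E = 0) (hn : n E = 0) : p E = 0 := by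
  have main : ∀ ε : ℝ, 0 < ε → (p E).toReal ≤ Real.sqrt ε + 2 * ε := by
    intro ε hε
    have hε' : (ENNReal.ofReal ε) ≠ 0 := by
      simp [ENNReal.ofReal_eq_zero, not_le, hε]
    -- closed set inside E capturing most of p
    obtain ⟨K, hKE, hKc, hK⟩ := hE.exists_isClosed_lt_add (μ := p) (measure_ne_top p E) hε'
    -- open set around E small for μ and n
    have hμn : (μ + n) E < ENNReal.ofReal ε := by
      have h0 : (μ + n) E = 0 := by simp [Measure.add_apply, hμ, hn]
      rw [h0]
      exact pos_iff_ne_zero.mpr hε'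
    obtain ⟨U, hEU, hUo, hU⟩ := Set.exists_isOpen_lt_of_lt (μ := μ + n) E _ hμn
    have hKU : K ⊆ U := hKE.trans hEU
    -- Urysohn function
    have hdisj : Disjoint Uᶜ K := disjoint_compl_left_iff.mpr hKU
    obtain ⟨f, hf0, hf1, hf01⟩ :=
      exists_continuous_zero_one_of_isClosed hUo.isClosed_compl hKc hdisj
    have hfc : Continuous f := f.continuous
    have hfip : Integrable (⇑f) p :=
      hfc.integrable_of_hasCompactSupport (HasCompactSupport.of_compactSpace _)
    have hfin : Integrable (⇑f) n :=
      hfc.integrable_of_hasCompactSupport (HasCompactSupport.of_compactSpace _)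
    have hfsqi : Integrable (fun x => f x ^ 2) μ :=
      (hfc.pow 2).integrable_of_hasCompactSupport (HasCompactSupport.of_compactSpace _)
    have hfnonneg : ∀ x, 0 ≤ f x := fun x => (hf01 x).1
    have hfle1 : ∀ x, f x ≤ 1 := fun x => (hf01 x).2
    have hfU : ∀ x, x ∉ U → f x = 0 := fun x hx => hf0 hx
    -- measure bounds on U
    have hμU : (μ U).toReal < ε := by
      refine ENNReal.toReal_lt_of_lt_ofReal (lt_of_le_of_lt ?_ hU)
      rw [Measure.add_apply]; exact le_self_add
    have hnU : (n U).toReal < ε := by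
      refine ENNReal.toReal_lt_of_lt_ofReal (lt_of_le_of_lt ?_ hU)
      rw [Measure.add_apply]; exact le_add_self
    -- integral bounds
    have I1 : (p K).toReal ≤ ∫ x, f x ∂p := by
      rw [← measureReal_def, ← integral_indicator_one hKc.measurableSet]
      refine integral_mono ((integrable_const (1 : ℝ)).indicator hKc.measurableSet) hfip ?_
      intro x
      by_cases hx : x ∈ K
      · simp [Set.indicator_of_mem hx, hf1 hx]
      · simp [Set.indicator_of_notMem hx, hfnonneg x]
    have I2 : ∫ x, f x ∂n ≤ (n U).toReal := by
      rw [← measureReal_def, ← integral_indicator_one hUo.measurableSet]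
      refine integral_mono hfin ((integrable_const (1 : ℝ)).indicator hUo.measurableSet) ?_
      intro x
      by_cases hx : x ∈ U
      · simp [Set.indicator_of_mem hx, hfle1 x]
      · simp [Set.indicator_of_notMem hx, hfU x hx]
    have I3 : ∫ x, f x ^ 2 ∂μ ≤ (μ U).toReal := by
      rw [← measureReal_def, ← integral_indicator_one hUo.measurableSet]
      refine integral_mono hfsqi ((integrable_const (1 : ℝ)).indicator hUo.measurableSet) ?_
      intro x
      by_cases hx : x ∈ U
      · have h1 := hfnonneg x
        have h2 := hfle1 x
        simp only [Set.indicator_of_mem hx, Pi.one_apply]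
        nlinarith
      · simp [Set.indicator_of_notMem hx, hfU x hx]
    -- the key estimate
    set D : ℝ := (∫ x, f x ∂p) - ∫ x, f x ∂n with hD
    have hD2 : D ^ 2 ≤ ε := le_trans (h f) (le_trans I3 hμU.le)
    have hDle : D ≤ Real.sqrt ε := by
      calc D ≤ |D| := le_abs_self D
        _ = Real.sqrt (D ^ 2) := (Real.sqrt_sq_eq_abs D).symm
        _ ≤ Real.sqrt ε := Real.sqrt_le_sqrt hD2
    -- p E ≤ p K + ε (in reals)
    have hpE : (p E).toReal ≤ (p K).toReal + ε := by
      have h1 : (p E).toReal ≤ ((p K) + ENNReal.ofReal ε).toReal :=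
        ENNReal.toReal_mono (by finiteness) hK.le
      rwa [ENNReal.toReal_add (measure_ne_top p K) ENNReal.ofReal_ne_top,
        ENNReal.toReal_ofReal hε.le] at h1
    calc (p E).toReal ≤ (p K).toReal + ε := hpE
      _ ≤ (∫ x, f x ∂p) + ε := by linarith
      _ = D + (∫ x, f x ∂n) + ε := by rw [hD]; ring
      _ ≤ Real.sqrt ε + (n U).toReal + ε := by linarith
      _ ≤ Real.sqrt ε + 2 * ε := by linarith
  -- conclude
  have h0 : (p E).toReal ≤ 0 := by
    refine le_of_forall_pos_le_add ?_
    intro δ hδ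
    have hε : (0 : ℝ) < min ((δ / 3) ^ 2) (δ / 3) := by positivity
    have := main _ hε
    have hs : Real.sqrt (min ((δ / 3) ^ 2) (δ / 3)) ≤ δ / 3 := by
      calc Real.sqrt (min ((δ / 3) ^ 2) (δ / 3)) ≤ Real.sqrt ((δ / 3) ^ 2) :=
            Real.sqrt_le_sqrt (min_le_left _ _)
        _ = δ / 3 := by rw [Real.sqrt_sq (by positivity)]
    have h2 : min ((δ / 3) ^ 2) (δ / 3) ≤ δ / 3 := min_le_right _ _
    linarith
  have h1 : (p E).toReal = 0 := le_antisymm h0 ENNReal.toReal_nonneg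
  exact (ENNReal.toReal_eq_zero_iff _).mp h1 |>.resolve_right (measure_ne_top p E)

/-- If `μ` is a finite nonnegative Borel measure and `ν` a finite signed Borel measure on a
compact metric space `X` such that `(∫ f dν)² ≤ ∫ f² dμ` for every continuous `f : X → ℝ`,
then `ν` is absolutely continuous with respect to `μ`: the total variation `|ν|` vanishes
on every `μ`-null Borel set. -/
theorem stmt_10 {X : Type*} [MetricSpace X] [CompactSpace X] [MeasurableSpace X]
    [BorelSpace X] (μ : Measure X) [IsFiniteMeasure μ] (ν : SignedMeasure X)
    (h : ∀ f : C(X, ℝ), (signedIntegral ν (⇑f)) ^ 2 ≤ ∫ x, (f x) ^ 2 ∂μ) :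
    ∀ E : Set X, MeasurableSet E → μ E = 0 → ν.totalVariation E = 0 := by
  intro E hE hμE
  set p := ν.toJordanDecomposition.posPart with hp
  set nn := ν.toJordanDecomposition.negPart with hnn
  obtain ⟨s, hs, hps, hns⟩ := ν.toJordanDecomposition.mutuallySingular
  have hpn : ∀ f : C(X, ℝ), ((∫ x, f x ∂p) - ∫ x, f x ∂nn) ^ 2 ≤ ∫ x, (f x) ^ 2 ∂μ :=
    fun f => h f
  have hnp : ∀ f : C(X, ℝ), ((∫ x, f x ∂nn) - ∫ x, f x ∂p) ^ 2 ≤ ∫ x, (f x) ^ 2 ∂μ := by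
    intro f
    have := hpn f
    rw [← neg_sub, neg_pow] at this
    simpa using this
  have hpE : p E = 0 := by
    have h1 : p (E ∩ sᶜ) = 0 := by
      refine key_aux μ p nn hpn (E ∩ sᶜ) (hE.inter hs.compl) ?_ ?_
      · exact measure_mono_null Set.inter_subset_left hμE
      · exact measure_mono_null Set.inter_subset_right hns
    have h2 : p (E ∩ s) = 0 := measure_mono_null Set.inter_subset_right hps
    have h3 : p E ≤ p (E ∩ s) + p (E ∩ sᶜ) := by
      conv_lhs => rw [← Set.inter_union_compl E s]
      exact measure_union_le _ _
    simpa [h1, h2] using le_antisymm (by simpa [h1, h2] using h3) (zero_le)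
  have hnE : nn E = 0 := by
    have h1 : nn (E ∩ s) = 0 := by
      refine key_aux μ nn p hnp (E ∩ s) (hE.inter hs) ?_ ?_
      · exact measure_mono_null Set.inter_subset_left hμE
      · exact measure_mono_null Set.inter_subset_right hps
    have h2 : nn (E ∩ sᶜ) = 0 := measure_mono_null Set.inter_subset_right hns
    have h3 : nn E ≤ nn (E ∩ s) + nn (E ∩ sᶜ) := by
      conv_lhs => rw [← Set.inter_union_compl E s]
      exact measure_union_le _ _
    simpa [h1, h2] using le_antisymm (by simpa [h1, h2] using h3) (zero_le)
  show (ν.toJordanDecomposition.posPart + ν.toJordanDecomposition.negPart) E = 0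
  rw [Measure.add_apply, ← hp, ← hnn, hpE, hnE, add_zero]
end
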